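/- Let $k$ be an $n$-dimensional Calderón–Zygmund kernel with size bound $|k(x,y)| \leq c|x-y|^{-n}$, let $\Phi$ be a nonnegative $1$-Lipschitz function on $\mathbb{R}^d$, and let $k_\Phi(x,y) = k(x,y)/(1 + k(x,y)^2 \Phi(x)^n \Phi(y)^n)$ be the suppressed kernel. Then for every $x, y \in \mathbb{R}^d$ with $x \neq y$, $|k_\Phi(x,y) - k(x,y)| \leq C \Phi(x)^n / |x-y|^{2n}$, where $C$ depends only on $n$ and $c$. -/

import Mathlib

open MeasureTheory Metric Set

/-- Difference between the suppressed kernel and the original kernel: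
`|k_Φ(x,y) - k(x,y)| ≤ C Φ(x)ⁿ / |x-y|^{2n}`. -/
theorem stmt2 (d n : ℕ) (hn : 1 ≤ n) (c : ℝ) (hc : 0 < c)
    (k : EuclideanSpace ℝ (Fin d) → EuclideanSpace ℝ (Fin d) → ℝ)
    (hanti : ∀ x y, x ≠ y → k y x = -k x y)
    (hsize : ∀ x y, x ≠ y → |k x y| ≤ c / dist x y ^ n)
    (hreg : ∀ x x' y, x ≠ y → x' ≠ y → dist x x' ≤ dist x y / 2 →
      |k x y - k x' y| ≤ c * dist x x' / dist x y ^ (n + 1))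
    (Φ : EuclideanSpace ℝ (Fin d) → ℝ) (hΦ0 : ∀ x, 0 ≤ Φ x)
    (hΦlip : LipschitzWith 1 Φ)
    (kΦ : EuclideanSpace ℝ (Fin d) → EuclideanSpace ℝ (Fin d) → ℝ)
    (hkΦ : ∀ x y, kΦ x y = k x y / (1 + k x y ^ 2 * Φ x ^ n * Φ y ^ n)) :
    ∃ C > 0, ∀ x y, x ≠ y →
      |kΦ x y - k x y| ≤ C * Φ x ^ n / dist x y ^ (2 * n) := by
  refine ⟨c ^ 2 * 2 ^ n * (c + 1), by positivity, ?_⟩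
  intro x y hxy
  have hd : 0 < dist x y := dist_pos.mpr hxy
  have hdn : 0 < dist x y ^ n := by positivity
  set t := k x y with ht
  have hA : 0 ≤ t ^ 2 * Φ x ^ n * Φ y ^ n :=
    mul_nonneg (mul_nonneg (sq_nonneg t) (pow_nonneg (hΦ0 x) n)) (pow_nonneg (hΦ0 y) n)
  have h1A : 0 < 1 + t ^ 2 * Φ x ^ n * Φ y ^ n := by linarith
  have hsz := hsize x y hxy
  have habs : |kΦ x y| = |t| / (1 + t ^ 2 * Φ x ^ n * Φ y ^ n) := by
    rw [hkΦ, abs_div, abs_of_pos h1A]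
  have hdiff : |kΦ x y - t| = (t ^ 2 * Φ x ^ n * Φ y ^ n) * |kΦ x y| := by
    have : kΦ x y - t = -((t ^ 2 * Φ x ^ n * Φ y ^ n) * kΦ x y) := by
      rw [hkΦ, ← ht]; field_simp; ring
    rw [this, abs_neg, abs_mul, abs_of_nonneg hA]
  have key : Φ y ^ n * |kΦ x y| ≤ 2 ^ n * (c + 1) := by
    rcases le_or_gt (Φ y) (2 * dist x y) with h | h
    · have hk1 : |kΦ x y| ≤ c / dist x y ^ n := by
        refine le_trans ?_ hsz
        rw [habs]
        exact div_le_self (abs_nonneg _) (by linarith)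
      have hΦyn : Φ y ^ n ≤ (2 * dist x y) ^ n := pow_le_pow_left₀ (hΦ0 y) h n
      calc Φ y ^ n * |kΦ x y| ≤ (2 * dist x y) ^ n * (c / dist x y ^ n) :=
            mul_le_mul hΦyn hk1 (abs_nonneg _) (by positivity)
        _ = 2 ^ n * c := by rw [mul_pow]; field_simp
        _ ≤ 2 ^ n * (c + 1) := by nlinarith [pow_pos (by norm_num : (0:ℝ) < 2) n]
    · have hΦx : Φ y / 2 ≤ Φ x := by
        have hlip : |Φ x - Φ y| ≤ dist x y := by
          have h' : dist (Φ x) (Φ y) ≤ dist x y := by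
            simpa using hΦlip.dist_le_mul x y
          rw [Real.dist_eq] at h'
          exact h'
        have := abs_le.mp hlip
        linarith
      have hΦy : 0 < Φ y := by linarith
      have hΦxn : (Φ y / 2) ^ n ≤ Φ x ^ n := pow_le_pow_left₀ (by linarith [hΦ0 y]) hΦx n
      -- show Φ y ^ n * |kΦ x y| ≤ 2 ^ n
      have h2 : Φ y ^ n * |kΦ x y| ≤ 2 ^ n := by
        rw [habs, ← mul_div_assoc, div_le_iff₀ h1A]
        have hge : t ^ 2 * Φ y ^ n * Φ y ^ n / 2 ^ n ≤ t ^ 2 * Φ x ^ n * Φ y ^ n := by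
          have h' := mul_le_mul_of_nonneg_left hΦxn (sq_nonneg t)
          have hdiv : (Φ y / 2) ^ n = Φ y ^ n / 2 ^ n := div_pow _ _ n
          rw [hdiv] at h'
          calc t ^ 2 * Φ y ^ n * Φ y ^ n / 2 ^ n
              = t ^ 2 * (Φ y ^ n / 2 ^ n) * Φ y ^ n := by ring
            _ ≤ t ^ 2 * Φ x ^ n * Φ y ^ n :=
                mul_le_mul_of_nonneg_right h' (pow_nonneg (hΦ0 y) n)
        set u := |t| * Φ y ^ n with hu
        have hu0 : 0 ≤ u := by positivity
        have husq : u ^ 2 = t ^ 2 * Φ y ^ n * Φ y ^ n := by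
          rw [hu]; rw [mul_pow, sq_abs]; ring
        have h2n : (1:ℝ) ≤ 2 ^ n := one_le_pow₀ (by norm_num)
        have h2np : (0:ℝ) < 2 ^ n := by positivity
        calc Φ y ^ n * |t| = u := by rw [hu]; ring
          _ ≤ 2 ^ n * (1 + u ^ 2 / 2 ^ n) := by
              have hcancel : 2 ^ n * (1 + u ^ 2 / 2 ^ n) = 2 ^ n + u ^ 2 := by
                field_simp
              rw [hcancel]
              nlinarith [sq_nonneg (u - 1)]
          _ ≤ 2 ^ n * (1 + t ^ 2 * Φ x ^ n * Φ y ^ n) := by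
              gcongr
              rw [husq]
              linarith [hge]
      calc Φ y ^ n * |kΦ x y| ≤ 2 ^ n := h2
        _ ≤ 2 ^ n * (c + 1) := by nlinarith [pow_pos (by norm_num : (0:ℝ) < 2) n]
  have ht2 : t ^ 2 ≤ c ^ 2 / dist x y ^ (2 * n) := by
    have : t ^ 2 = |t| ^ 2 := (sq_abs t).symm
    rw [this, mul_comm 2 n, pow_mul, ← div_pow]
    exact pow_le_pow_left₀ (abs_nonneg _) hsz 2
  calc |kΦ x y - t| = (t ^ 2 * Φ x ^ n) * (Φ y ^ n * |kΦ x y|) := by rw [hdiff]; ring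
    _ ≤ (c ^ 2 / dist x y ^ (2 * n) * Φ x ^ n) * (2 ^ n * (c + 1)) := by
        refine mul_le_mul ?_ key (mul_nonneg (pow_nonneg (hΦ0 y) n) (abs_nonneg _))
          (mul_nonneg (by positivity) (pow_nonneg (hΦ0 x) n))
        exact mul_le_mul_of_nonneg_right ht2 (pow_nonneg (hΦ0 x) n)
    _ = c ^ 2 * 2 ^ n * (c + 1) * Φ x ^ n / dist x y ^ (2 * n) := by ring
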